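/- If G is a 3-connected graph and G' is a graph whose suppression of all degree-2 vertices (i.e., smoothing the subdivision vertices) yields G, and G' has at most two degree-2 vertices that are non-adjacent, then G' is 2-connected. -/

import Mathlib

/-- `G` is 2-connected: at least 3 vertices, connected, and no cutvertex. -/
def SimpleGraph.TwoConnected {V : Type*} [Fintype V] (G : SimpleGraph V) : Prop :=
  3 ≤ Fintype.card V ∧ G.Connected ∧
    ∀ a : V, (((⊤ : G.Subgraph).deleteVerts {a}).coe.Connected)

/-- `G` is 3-connected: at least 4 vertices, connected, and removing any two vertices
leaves it connected. -/
def SimpleGraph.ThreeConnected {V : Type*} [Fintype V] (G : SimpleGraph V) : Prop :=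
  4 ≤ Fintype.card V ∧ G.Connected ∧
    ∀ a b : V, (((⊤ : G.Subgraph).deleteVerts {a, b}).coe.Connected)

/-- The graph obtained from `G'` by suppressing (smoothing) all its degree-2 vertices:
its vertices are the vertices of `G'` of degree `≠ 2`, and two of them are adjacent if
they are joined in `G'` by a nontrivial path all of whose internal vertices have
degree 2. -/
def SimpleGraph.smooth {W : Type*} [Fintype W] (G' : SimpleGraph W)
    [DecidableRel G'.Adj] : SimpleGraph {w : W // G'.degree w ≠ 2} :=
  SimpleGraph.fromRel fun a b =>
    ∃ p : G'.Walk a.1 b.1, p.IsPath ∧ 0 < p.length ∧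
      ∀ w ∈ p.support, w ≠ a.1 → w ≠ b.1 → G'.degree w = 2

open SimpleGraph

section Helpers

lemma reach_map {α β : Type*} {A : SimpleGraph α} {B : SimpleGraph β} (f : α → β)
    (h : ∀ x y, A.Adj x y → B.Reachable (f x) (f y)) {u v : α} (p : A.Walk u v) :
    B.Reachable (f u) (f v) := by
  induction p with
  | nil => exact Reachable.refl _
  | cons h' p ih => exact (h _ _ h').trans ih

lemma conn_transfer {α β : Type*} {A : SimpleGraph α} {B : SimpleGraph β} (e : A ≃g B)
    (s : Set α) (h : ((⊤ : A.Subgraph).deleteVerts s).coe.Connected) :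
    ((⊤ : B.Subgraph).deleteVerts (e '' s)).coe.Connected := by
  rw [connected_iff] at h ⊢
  have hmem : ∀ x : ((⊤ : A.Subgraph).deleteVerts s).verts,
      (e x.1 : β) ∈ ((⊤ : B.Subgraph).deleteVerts (e '' s)).verts := by
    rintro ⟨x, hx⟩
    simp only [Subgraph.deleteVerts_verts, Subgraph.verts_top, Set.mem_diff, Set.mem_univ,
      true_and]
    rintro ⟨z, hz, hze⟩
    exact hx.2 (e.toEquiv.injective hze ▸ hz)
  set f : ((⊤ : A.Subgraph).deleteVerts s).verts → ((⊤ : B.Subgraph).deleteVerts (e '' s)).verts :=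
    fun x => ⟨e x.1, hmem x⟩ with hf
  have hadj : ∀ x y, ((⊤ : A.Subgraph).deleteVerts s).coe.Adj x y →
      ((⊤ : B.Subgraph).deleteVerts (e '' s)).coe.Reachable (f x) (f y) := by
    intro x y hxy
    have h1 : A.Adj x.1 y.1 := Subgraph.Adj.adj_sub ((Subgraph.coe_adj _ _ _) ▸ hxy)
    have h2 : B.Adj (e x.1) (e y.1) := e.map_adj_iff.2 h1
    refine SimpleGraph.Adj.reachable ?_
    simp only [hf, Subgraph.coe_adj, Subgraph.deleteVerts_adj, Subgraph.top_adj]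
    exact ⟨trivial, by simpa using x.2.2, trivial, by simpa using y.2.2, h2⟩
  constructor
  · intro x y
    have hmem' : ∀ x : ((⊤ : B.Subgraph).deleteVerts (e '' s)).verts,
        (e.symm x.1 : α) ∈ ((⊤ : A.Subgraph).deleteVerts s).verts := by
      rintro ⟨x, hx⟩
      simp only [Subgraph.deleteVerts_verts, Subgraph.verts_top, Set.mem_diff, Set.mem_univ,
        true_and]
      exact fun hz => hx.2 ⟨e.symm x, hz, by simp⟩
    have h1 : f ⟨e.symm x.1, hmem' x⟩ = x := Subtype.ext (by simp [hf])
    have h2 : f ⟨e.symm y.1, hmem' y⟩ = y := Subtype.ext (by simp [hf])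
    rw [← h1, ← h2]
    obtain ⟨p⟩ := h.1 ⟨e.symm x.1, hmem' x⟩ ⟨e.symm y.1, hmem' y⟩
    exact reach_map f hadj p
  · obtain ⟨x⟩ := h.2
    exact ⟨f x⟩

lemma connected_transfer {α β : Type*} {A : SimpleGraph α} {B : SimpleGraph β} (e : A ≃g B)
    (h : A.Connected) : B.Connected := by
  rw [connected_iff] at h ⊢
  refine ⟨fun x y => ?_, h.2.map e.toEquiv⟩
  obtain ⟨p⟩ := h.1 (e.symm x) (e.symm y)
  simpa using reach_map e (fun a b hab => (e.map_adj_iff.2 hab).reachable) p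

lemma threeConnected_transfer {α β : Type*} [Fintype α] [Fintype β]
    {A : SimpleGraph α} {B : SimpleGraph β} (e : A ≃g B)
    (h : A.ThreeConnected) : B.ThreeConnected := by
  obtain ⟨hc, hconn, hdel⟩ := h
  refine ⟨le_trans hc (Fintype.card_congr e.toEquiv).le, connected_transfer e hconn, ?_⟩
  intro a b
  have h := conn_transfer e {e.symm a, e.symm b} (hdel (e.symm a) (e.symm b))
  have himg : (e '' {e.symm a, e.symm b} : Set β) = {a, b} := by
    simp [Set.image_insert_eq]
  rwa [himg] at h

lemma nbr_ne {α : Type*} [Fintype α] {S : SimpleGraph α} (hS : S.ThreeConnected)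
    (u v : α) (huv : u ≠ v) : ∃ t : α, S.Adj u t ∧ t ≠ v := by
  classical
  have h4 : 4 ≤ Fintype.card α := hS.1
  have hz : ∃ z : α, z ∉ ({u, v} : Finset α) := by
    by_contra hcon
    push_neg at hcon
    have hsub : (Finset.univ : Finset α) ⊆ {u, v} := fun x _ => hcon x
    have h1 := Finset.card_le_card hsub
    rw [Finset.card_univ] at h1
    have h2 : ({u, v} : Finset α).card ≤ 2 := by
      have := Finset.card_insert_le u ({v} : Finset α)
      simp at this; omega
    omega
  obtain ⟨z, hz⟩ := hz
  simp only [Finset.mem_insert, Finset.mem_singleton, not_or] at hz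
  have hz' : ∃ z' : α, z' ∉ ({u, v, z} : Finset α) := by
    by_contra hcon
    push_neg at hcon
    have hsub : (Finset.univ : Finset α) ⊆ {u, v, z} := fun x _ => hcon x
    have h1 := Finset.card_le_card hsub
    rw [Finset.card_univ] at h1
    have h3 : ({u, v, z} : Finset α).card ≤ 3 := by
      have ha := Finset.card_insert_le u ({v, z} : Finset α)
      have hb := Finset.card_insert_le v ({z} : Finset α)
      simp at hb; omega
    omega
  obtain ⟨z', hz'⟩ := hz'
  simp only [Finset.mem_insert, Finset.mem_singleton, not_or] at hz'
  have hconn := hS.2.2 v z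
  have hu : u ∈ ((⊤ : S.Subgraph).deleteVerts {v, z}).verts := by
    simp [huv, Ne.symm hz.1]
  have hz'' : z' ∈ ((⊤ : S.Subgraph).deleteVerts {v, z}).verts := by
    simp [hz'.2.1, hz'.2.2]
  obtain ⟨p⟩ := hconn.preconnected ⟨u, hu⟩ ⟨z', hz''⟩
  have hne : (⟨u, hu⟩ : ((⊤ : S.Subgraph).deleteVerts {v, z}).verts) ≠ ⟨z', hz''⟩ := by
    intro hh
    exact hz'.1 (congrArg Subtype.val hh).symm
  have hnil : ¬ p.Nil := Walk.not_nil_of_ne hne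
  have hadj := p.adj_snd hnil
  have hadj' : S.Adj u (p.getVert 1).1 := Subgraph.Adj.adj_sub ((Subgraph.coe_adj _ _ _) ▸ hadj)
  refine ⟨(p.getVert 1).1, hadj', ?_⟩
  have hm := (p.getVert 1).2
  simp only [Subgraph.deleteVerts_verts, Subgraph.verts_top, Set.mem_diff, Set.mem_univ,
    true_and, Set.mem_insert_iff, Set.mem_singleton_iff, not_or] at hm
  exact hm.1

end Helpers

section Smooth

variable {W : Type*} [Fintype W] (G' : SimpleGraph W) [DecidableRel G'.Adj]

lemma aux_path {a b : W}
    (hnonadj : {w : W | G'.degree w = 2}.Pairwise fun a b => ¬ G'.Adj a b)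
    (p : G'.Walk a b) (hp : p.IsPath) (hlen : 0 < p.length)
    (hint : ∀ w ∈ p.support, w ≠ a → w ≠ b → G'.degree w = 2) :
    G'.Adj a b ∨ ∃ w, G'.degree w = 2 ∧ G'.Adj a w ∧ G'.Adj w b := by
  cases p with
  | nil => simp at hlen
  | @cons _ c _ h q =>
    by_cases hcb : c = b
    · subst hcb; exact Or.inl h
    · have hc2 : G'.degree c = 2 := by
        refine hint c (by simp) (fun hca => ?_) hcb
        exact G'.irrefl (hca ▸ h)
      cases q with
      | nil => exact absurd rfl hcb
      | @cons _ d _ h2 q2 =>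
        by_cases hdb : d = b
        · subst hdb
          exact Or.inr ⟨c, hc2, h, h2⟩
        · exfalso
          have hnd := hp.support_nodup
          simp only [Walk.support_cons, List.nodup_cons] at hnd
          have had : a ≠ d := by
            intro hh
            subst hh
            exact hnd.1 (List.mem_cons_of_mem _ (Walk.start_mem_support q2))
          have hd2 : G'.degree d = 2 := by
            refine hint d ?_ (Ne.symm had) hdb
            simp [Walk.support_cons]
          exact hnonadj (by exact hc2) (by exact hd2) h2.ne h2

lemma adj_structure
    (hnonadj : {w : W | G'.degree w = 2}.Pairwise fun a b => ¬ G'.Adj a b)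
    {x y : {w : W // G'.degree w ≠ 2}} (h : G'.smooth.Adj x y) :
    G'.Adj x.1 y.1 ∨ ∃ w, G'.degree w = 2 ∧ G'.Adj x.1 w ∧ G'.Adj w y.1 := by
  rw [SimpleGraph.smooth, fromRel_adj] at h
  obtain ⟨hne, h | h⟩ := h
  · obtain ⟨p, hp, hlen, hint⟩ := h
    exact aux_path G' hnonadj p hp hlen hint
  · obtain ⟨p, hp, hlen, hint⟩ := h
    rcases aux_path G' hnonadj p hp hlen hint with h' | ⟨w, hw, h1, h2⟩
    · exact Or.inl h'.symm
    · exact Or.inr ⟨w, hw, h2.symm, h1.symm⟩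

lemma deg2_nbrs [DecidableEq W] {w : W} (hw : G'.degree w = 2) :
    ∃ u v : W, u ≠ v ∧ G'.Adj w u ∧ G'.Adj w v ∧ ∀ z, G'.Adj w z → z = u ∨ z = v := by
  have : (G'.neighborFinset w).card = 2 := hw
  obtain ⟨u, v, huv, hset⟩ := Finset.card_eq_two.1 this
  refine ⟨u, v, huv, ?_, ?_, ?_⟩
  · rw [← mem_neighborFinset, hset]; simp
  · rw [← mem_neighborFinset, hset]; simp
  · intro z hz
    have : z ∈ G'.neighborFinset w := (mem_neighborFinset _ _ _).2 hz
    rw [hset] at this; simpa using this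

lemma nbr_nondeg2
    (hnonadj : {w : W | G'.degree w = 2}.Pairwise fun a b => ¬ G'.Adj a b)
    {w z : W} (hw : G'.degree w = 2) (h : G'.Adj w z) : G'.degree z ≠ 2 :=
  fun hz2 => hnonadj (by exact hw) (by exact hz2) h.ne h

lemma memD {a p : W} (hp : p ≠ a) : p ∈ ((⊤ : G'.Subgraph).deleteVerts {a}).verts := by
  simp [hp]

lemma D_adj {a p q : W} (hp : p ≠ a) (hq : q ≠ a) (h : G'.Adj p q) :
    ((⊤ : G'.Subgraph).deleteVerts {a}).coe.Adj ⟨p, memD G' hp⟩ ⟨q, memD G' hq⟩ := by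
  simp [Subgraph.deleteVerts_adj, hp, hq, h]

lemma step_reach
    (hnonadj : {w : W | G'.degree w = 2}.Pairwise fun a b => ¬ G'.Adj a b)
    {a : W} {x y : {w : W // G'.degree w ≠ 2}} (hadj : G'.smooth.Adj x y)
    (hx : x.1 ≠ a) (hy : y.1 ≠ a)
    (hmid : ∀ m, G'.degree m = 2 → G'.Adj x.1 m → G'.Adj m y.1 → m ≠ a) :
    ((⊤ : G'.Subgraph).deleteVerts {a}).coe.Reachable ⟨x.1, memD G' hx⟩ ⟨y.1, memD G' hy⟩ := by
  rcases adj_structure G' hnonadj hadj with h | ⟨m, hm2, h1, h2⟩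
  · exact (D_adj G' hx hy h).reachable
  · exact ((D_adj G' hx (hmid m hm2 h1 h2) h1).reachable).trans
      ((D_adj G' (hmid m hm2 h1 h2) hy h2).reachable)

lemma caseA (hS : G'.smooth.ThreeConnected)
    (hnonadj : {w : W | G'.degree w = 2}.Pairwise fun a b => ¬ G'.Adj a b)
    {a : W} (ha : G'.degree a ≠ 2)
    {x y : {w : W // G'.degree w ≠ 2}} (hx : x.1 ≠ a) (hy : y.1 ≠ a) :
    ((⊤ : G'.Subgraph).deleteVerts {a}).coe.Reachable ⟨x.1, memD G' hx⟩ ⟨y.1, memD G' hy⟩ := by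
  set aa : {w : W // G'.degree w ≠ 2} := ⟨a, ha⟩ with haa
  have hconn := hS.2.2 aa aa
  have hxm : x ∈ ((⊤ : G'.smooth.Subgraph).deleteVerts {aa, aa}).verts := by
    simp only [Subgraph.deleteVerts_verts, Subgraph.verts_top, Set.mem_diff, Set.mem_univ,
      true_and, Set.mem_insert_iff, Set.mem_singleton_iff, not_or]
    exact ⟨fun hh => hx (congrArg Subtype.val hh), fun hh => hx (congrArg Subtype.val hh)⟩
  have hym : y ∈ ((⊤ : G'.smooth.Subgraph).deleteVerts {aa, aa}).verts := by
    simp only [Subgraph.deleteVerts_verts, Subgraph.verts_top, Set.mem_diff, Set.mem_univ,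
      true_and, Set.mem_insert_iff, Set.mem_singleton_iff, not_or]
    exact ⟨fun hh => hy (congrArg Subtype.val hh), fun hh => hy (congrArg Subtype.val hh)⟩
  obtain ⟨p⟩ := hconn.preconnected ⟨x, hxm⟩ ⟨y, hym⟩
  have hne : ∀ z : ((⊤ : G'.smooth.Subgraph).deleteVerts {aa, aa}).verts, (z.1.1 : W) ≠ a := by
    rintro ⟨z, hz⟩ hh
    exact hz.2 (Or.inl (Subtype.ext hh))
  exact reach_map (B := ((⊤ : G'.Subgraph).deleteVerts {a}).coe)
    (fun z => (⟨z.1.1, memD G' (hne z)⟩ : ((⊤ : G'.Subgraph).deleteVerts {a}).verts))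
    (fun z w hzw => by
      have hadj : G'.smooth.Adj z.1 w.1 := Subgraph.Adj.adj_sub ((Subgraph.coe_adj _ _ _) ▸ hzw)
      exact step_reach G' hnonadj hadj (hne z) (hne w)
        (fun m hm2 _ _ hma => ha (hma ▸ hm2))) p

lemma caseB (hS : G'.smooth.ThreeConnected)
    (hnonadj : {w : W | G'.degree w = 2}.Pairwise fun a b => ¬ G'.Adj a b)
    {a u v : W} (ha : G'.degree a = 2) (hau : G'.Adj a u) (hav : G'.Adj a v) (huv : u ≠ v)
    (hnb : ∀ z, G'.Adj a z → z = u ∨ z = v)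
    (hu2 : G'.degree u ≠ 2) (hv2 : G'.degree v ≠ 2)
    (hva : v ≠ a) :
    ∀ (z : {w : W // G'.degree w ≠ 2}) (hza : z.1 ≠ a),
      ((⊤ : G'.Subgraph).deleteVerts {a}).coe.Reachable ⟨z.1, memD G' hza⟩
        ⟨v, memD G' hva⟩ := by
  set uu : {w : W // G'.degree w ≠ 2} := ⟨u, hu2⟩ with huudef
  set vv : {w : W // G'.degree w ≠ 2} := ⟨v, hv2⟩ with hvvdef
  have hB1 : ∀ (z : {w : W // G'.degree w ≠ 2}) (hzu : z.1 ≠ u) (hza : z.1 ≠ a),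
      ((⊤ : G'.Subgraph).deleteVerts {a}).coe.Reachable ⟨z.1, memD G' hza⟩
        ⟨v, memD G' hva⟩ := by
    intro z hzu hza
    have hconn := hS.2.2 uu uu
    have hnein : ∀ t : {w : W // G'.degree w ≠ 2}, t.1 ≠ u →
        t ∈ ((⊤ : G'.smooth.Subgraph).deleteVerts {uu, uu}).verts := by
      intro t ht
      simp only [Subgraph.deleteVerts_verts, Subgraph.verts_top, Set.mem_diff, Set.mem_univ,
        true_and, Set.mem_insert_iff, Set.mem_singleton_iff, not_or]
      exact ⟨fun hh => ht (congrArg Subtype.val hh), fun hh => ht (congrArg Subtype.val hh)⟩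
    obtain ⟨p⟩ := hconn.preconnected ⟨z, hnein z hzu⟩ ⟨vv, hnein vv (Ne.symm huv)⟩
    have hneu : ∀ t : ((⊤ : G'.smooth.Subgraph).deleteVerts {uu, uu}).verts, (t.1.1 : W) ≠ u := by
      rintro ⟨t, ht⟩ hh
      exact ht.2 (Or.inl (Subtype.ext hh))
    have hnea : ∀ t : ((⊤ : G'.smooth.Subgraph).deleteVerts {uu, uu}).verts, (t.1.1 : W) ≠ a := by
      intro t hh
      exact t.1.2 (hh ▸ ha)
    exact reach_map (B := ((⊤ : G'.Subgraph).deleteVerts {a}).coe)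
      (fun t => (⟨t.1.1, memD G' (hnea t)⟩ : ((⊤ : G'.Subgraph).deleteVerts {a}).verts))
      (fun s t hst => by
        have hadj : G'.smooth.Adj s.1 t.1 := Subgraph.Adj.adj_sub ((Subgraph.coe_adj _ _ _) ▸ hst)
        refine step_reach G' hnonadj hadj (hnea s) (hnea t) ?_
        intro m hm2 h1 h2 hma
        subst hma
        rcases hnb s.1.1 h1.symm with hh | hh
        · exact hneu s hh
        · rcases hnb t.1.1 h2 with hh' | hh'
          · exact hneu t hh'
          · exact hadj.ne (Subtype.ext (hh.trans hh'.symm))) p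
  intro z hza
  by_cases hzu : z.1 = u
  · -- z = uu : connect u to some neighbor t ≠ vv, then t to v
    have hz : z = uu := Subtype.ext hzu
    subst hz
    obtain ⟨t, hadj, htv⟩ := nbr_ne hS uu vv (fun hh => huv (congrArg Subtype.val hh))
    have hua : u ≠ a := fun hh => G'.irrefl (hh ▸ hau)
    have hta : t.1 ≠ a := fun hh => t.2 (hh ▸ ha)
    have step : ((⊤ : G'.Subgraph).deleteVerts {a}).coe.Reachable ⟨u, memD G' hua⟩
        ⟨t.1, memD G' hta⟩ := by
      refine step_reach G' hnonadj hadj hua hta ?_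
      intro m hm2 h1 h2 hma
      subst hma
      rcases hnb t.1 h2 with hh | hh
      · exact hadj.ne (Subtype.ext hh.symm)
      · exact htv (Subtype.ext hh)
    have htu : t.1 ≠ u := fun hh => hadj.ne (Subtype.ext hh.symm)
    exact step.trans (hB1 t htu hta)
  · exact hB1 z hzu hza

end Smooth

/-- If suppressing all degree-2 vertices of `G'` yields a 3-connected graph `G`, and
`G'` has at most two degree-2 vertices which are moreover pairwise non-adjacent,
then `G'` is 2-connected. -/
theorem twoConnected_of_subdivision_of_threeConnected
    {V W : Type*} [Fintype V] [Fintype W]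
    (G : SimpleGraph V) (G' : SimpleGraph W) [DecidableRel G'.Adj]
    (h3 : G.ThreeConnected)
    (hiso : Nonempty (G ≃g G'.smooth))
    (hcard : {w : W | G'.degree w = 2}.ncard ≤ 2)
    (hnonadj : {w : W | G'.degree w = 2}.Pairwise fun a b => ¬ G'.Adj a b) :
    G'.TwoConnected := by
  classical
  obtain ⟨e⟩ := hiso
  have hS : G'.smooth.ThreeConnected := threeConnected_transfer e h3
  have hcardT : 4 ≤ Fintype.card {w : W // G'.degree w ≠ 2} := hS.1
  have hcardW : 3 ≤ Fintype.card W := by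
    have := Fintype.card_subtype_le (fun w : W => G'.degree w ≠ 2)
    omega
  refine ⟨hcardW, ?_, ?_⟩
  · -- connectivity of G'
    rw [connected_iff]
    constructor
    · have hkey : ∀ x y : {w : W // G'.degree w ≠ 2}, G'.Reachable x.1 y.1 := by
        intro x y
        obtain ⟨p⟩ := hS.2.1.preconnected x y
        refine reach_map Subtype.val (fun z w h => ?_) p
        rcases adj_structure G' hnonadj h with h' | ⟨m, _, h1, h2⟩
        · exact h'.reachable
        · exact h1.reachable.trans h2.reachable
      have hatt : ∀ w : W, ∃ z : {w : W // G'.degree w ≠ 2}, G'.Reachable w z.1 := by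
        intro w
        by_cases hw : G'.degree w = 2
        · obtain ⟨u, v, huv, h1, h2, _⟩ := deg2_nbrs G' hw
          exact ⟨⟨u, nbr_nondeg2 G' hnonadj hw h1⟩, h1.reachable⟩
        · exact ⟨⟨w, hw⟩, Reachable.refl _⟩
      intro x y
      obtain ⟨zx, hx⟩ := hatt x
      obtain ⟨zy, hy⟩ := hatt y
      exact hx.trans ((hkey zx zy).trans hy.symm)
    · exact Fintype.card_pos_iff.1 (by omega)
  · -- no cutvertex
    intro a
    rw [connected_iff]
    constructor
    · -- preconnected after removing a
      have hclaim : ∀ x : ((⊤ : G'.Subgraph).deleteVerts {a}).verts,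
          ∃ (z : {w : W // G'.degree w ≠ 2}) (hz : z.1 ≠ a),
            ((⊤ : G'.Subgraph).deleteVerts {a}).coe.Reachable x ⟨z.1, memD G' hz⟩ := by
        rintro ⟨x, hx⟩
        have hxa : x ≠ a := by
          intro hh
          exact hx.2 (by simp [hh])
        by_cases hxd : G'.degree x = 2
        · obtain ⟨u', v', huv', h1, h2, _⟩ := deg2_nbrs G' hxd
          have hu'2 := nbr_nondeg2 G' hnonadj hxd h1
          have hv'2 := nbr_nondeg2 G' hnonadj hxd h2
          by_cases hu'a : u' = a
          · have hv'a : v' ≠ a := fun hh => huv' (hu'a.trans hh.symm)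
            exact ⟨⟨v', hv'2⟩, hv'a, (D_adj G' hxa hv'a h2).reachable⟩
          · exact ⟨⟨u', hu'2⟩, hu'a, (D_adj G' hxa hu'a h1).reachable⟩
        · exact ⟨⟨x, hxd⟩, hxa, Reachable.refl _⟩
      intro x y
      obtain ⟨zx, hzxa, hrx⟩ := hclaim x
      obtain ⟨zy, hzya, hry⟩ := hclaim y
      refine hrx.trans (Reachable.trans ?_ hry.symm)
      by_cases hdeg : G'.degree a = 2
      · obtain ⟨u, v, huv, hau, hav, hnb⟩ := deg2_nbrs G' hdeg
        have hu2 := nbr_nondeg2 G' hnonadj hdeg hau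
        have hv2 := nbr_nondeg2 G' hnonadj hdeg hav
        have hva : v ≠ a := fun hh => G'.irrefl (hh ▸ hav)
        exact (caseB G' hS hnonadj hdeg hau hav huv hnb hu2 hv2 hva zx hzxa).trans
          (caseB G' hS hnonadj hdeg hau hav huv hnb hu2 hv2 hva zy hzya).symm
      · exact caseA G' hS hnonadj hdeg hzxa hzya
    · -- nonempty
      obtain ⟨b, hb⟩ := Fintype.exists_ne_of_one_lt_card (by omega) a
      exact ⟨⟨b, memD G' hb⟩⟩
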